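/- Let G be a graph of girth g ≥ 5, let X ⊆ V(G) with |X| = g−2, and let K_1,…,K_p be the vertex sets of the components of G[X] with p ≥ 3. Then there do not exist two distinct vertices in N_G(X) that both have neighbors in two distinct components K_i and K_j (for the same pair i ≠ j). -/

import Mathlib

open scoped Classical

variable {V : Type*}

/-- The external neighborhood of a set of vertices. -/
def extNbhd (G : SimpleGraph V) (X : Set V) : Set V :=
  {v | v ∉ X ∧ ∃ x ∈ X, G.Adj v x}

/-- The vertex set (in `V`) of a connected component of the induced subgraph `G[X]`. -/
def compVerts (G : SimpleGraph V) (X : Set V)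
    (C : (G.induce X).ConnectedComponent) : Set V :=
  {y | ∃ x : X, (G.induce X).connectedComponentMk x = C ∧ (x : V) = y}

/-- `w` has a neighbor in the component `C` of `G[X]`. -/
def touches (G : SimpleGraph V) (X : Set V) (w : V)
    (C : (G.induce X).ConnectedComponent) : Prop :=
  ∃ x : X, (G.induce X).connectedComponentMk x = C ∧ G.Adj w (x : V)

open SimpleGraph in
/-- A path in `G` between two vertices of a component `C` of `G[X]`, all of whose vertices
lie in `C`, of length at most `|C| - 1`. -/
lemma aux_supp_path [Fintype V] (G : SimpleGraph V) (X : Set V)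
    {C : (G.induce X).ConnectedComponent} {x y : X}
    (hx : (G.induce X).connectedComponentMk x = C)
    (hy : (G.induce X).connectedComponentMk y = C) :
    ∃ p : G.Walk (x : V) (y : V), p.IsPath ∧
      (∀ z ∈ p.support, ∃ z' : X,
        (G.induce X).connectedComponentMk z' = C ∧ (z' : V) = z) ∧
      p.length + 1 ≤ C.supp.ncard := by
  have hreach : (G.induce X).Reachable x y :=
    SimpleGraph.ConnectedComponent.exact (hx.trans hy.symm)
  obtain ⟨w⟩ := hreach
  set q : (G.induce X).Walk x y := w.toPath.1 with hqdef
  have hqp : q.IsPath := w.toPath.2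
  have hmem : ∀ z ∈ q.support, (G.induce X).connectedComponentMk z = C := by
    intro z hz
    have hr : (G.induce X).Reachable x z := (q.takeUntil z hz).reachable
    calc (G.induce X).connectedComponentMk z
        = (G.induce X).connectedComponentMk x :=
          SimpleGraph.ConnectedComponent.sound hr.symm
      _ = C := hx
  have hnodup : q.support.Nodup := hqp.support_nodup
  have hlenq : q.length + 1 ≤ C.supp.ncard := by
    have h1 : q.support.toFinset.card = q.support.length :=
      List.toFinset_card_of_nodup hnodup
    have hsubF : q.support.toFinset ⊆ C.supp.toFinset := by
      intro z hz
      rw [List.mem_toFinset] at hz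
      rw [Set.mem_toFinset]
      exact hmem z hz
    have h2 : q.support.toFinset.card ≤ C.supp.toFinset.card :=
      Finset.card_le_card hsubF
    have h3 : C.supp.ncard = C.supp.toFinset.card := Set.ncard_eq_toFinset_card' _
    have h4 : q.support.length = q.length + 1 := q.length_support
    omega
  refine ⟨q.map (SimpleGraph.Embedding.induce X).toHom, ?_, ?_, ?_⟩
  · exact q.map_isPath_of_injective Subtype.val_injective hqp
  · intro z hz
    change z ∈ (q.map (SimpleGraph.Embedding.induce X).toHom).support at hz
    rw [SimpleGraph.Walk.support_map, List.mem_map] at hz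
    obtain ⟨z', hz', rfl⟩ := hz
    exact ⟨z', hmem z' hz', rfl⟩
  · show (q.map (SimpleGraph.Embedding.induce X).toHom).length + 1 ≤ C.supp.ncard
    rwa [SimpleGraph.Walk.length_map]

/-- If `G` has girth `g ≥ 5`, `|X| = g - 2`, and `G[X]` has `p ≥ 3` components,
then no two distinct vertices of `N_G(X)` both have neighbors in the same two
distinct components of `G[X]`. -/
theorem stmt_8 [Fintype V] (G : SimpleGraph V) (g : ℕ)
    (hg : G.girth = (g : ℕ∞)) (hg5 : 5 ≤ g)
    (X : Set V) (hX : X.ncard = g - 2)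
    (hp : 3 ≤ Nat.card ((G.induce X).ConnectedComponent)) :
    ¬ ∃ u ∈ extNbhd G X, ∃ v ∈ extNbhd G X, u ≠ v ∧
      ∃ C D : (G.induce X).ConnectedComponent, C ≠ D ∧
        touches G X u C ∧ touches G X u D ∧ touches G X v C ∧ touches G X v D := by
  rintro ⟨u, ⟨huX, -⟩, v, ⟨hvX, -⟩, huv, C, D, hCD,
    ⟨xc, hxc, haxc⟩, ⟨xd, hxd, haxd⟩, ⟨yc, hyc, hayc⟩, ⟨yd, hyd, hayd⟩⟩
  classical
  -- a third component
  obtain ⟨E, hEC, hED⟩ : ∃ E : (G.induce X).ConnectedComponent, E ≠ C ∧ E ≠ D := by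
    haveI : Finite ((G.induce X).ConnectedComponent) := by
      have : Finite X := Set.toFinite X
      exact Quot.finite _
    haveI : Fintype ((G.induce X).ConnectedComponent) := Fintype.ofFinite _
    by_contra h
    push_neg at h
    have hsub : (Finset.univ : Finset ((G.induce X).ConnectedComponent)) ⊆ {C, D} := by
      intro E _
      by_cases hc : E = C
      · simp [hc]
      · simp [h E hc]
    have := Finset.card_le_card hsub
    have h2 : ({C, D} : Finset _).card ≤ 2 := Finset.card_insert_le _ _ |>.trans (by simp)
    rw [Nat.card_eq_fintype_card] at hp
    simp [Finset.card_univ] at this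
    omega
  -- size bound on two components
  have hsize : C.supp.ncard + D.supp.ncard + 1 ≤ X.ncard := by
    obtain ⟨e, he⟩ := E.exists_rep
    have heC : e ∉ C.supp := by
      rw [SimpleGraph.ConnectedComponent.mem_supp_iff]
      intro h; exact hEC (he ▸ h ▸ rfl)
    have heD : e ∉ D.supp := by
      rw [SimpleGraph.ConnectedComponent.mem_supp_iff]
      intro h; exact hED (he ▸ h ▸ rfl)
    have hdisj : Disjoint C.supp D.supp := by
      rw [Set.disjoint_left]
      intro a haC haD
      rw [SimpleGraph.ConnectedComponent.mem_supp_iff] at haC haD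
      exact hCD (haC ▸ haD ▸ rfl)
    have hXn : X.ncard = Nat.card X := (Nat.card_coe_set_eq X).symm
    have hfin : ∀ s : Set X, s.Finite := fun s => Set.toFinite s
    have h1 : (C.supp ∪ D.supp).ncard = C.supp.ncard + D.supp.ncard :=
      Set.ncard_union_eq hdisj (hfin _) (hfin _)
    have h2 : (insert e (C.supp ∪ D.supp)).ncard = (C.supp ∪ D.supp).ncard + 1 :=
      Set.ncard_insert_of_notMem (by simp [heC, heD]) (hfin _)
    have h3 : (insert e (C.supp ∪ D.supp)).ncard ≤ (Set.univ : Set X).ncard :=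
      Set.ncard_le_ncard (Set.subset_univ _) (hfin _)
    rw [Set.ncard_univ] at h3
    omega
  -- paths inside the two components
  obtain ⟨pC, hpCpath, hpCsupp, hpClen⟩ := aux_supp_path G X hxc hyc
  obtain ⟨pD, hpDpath, hpDsupp, hpDlen⟩ := aux_supp_path G X hyd hxd
  -- basic membership facts
  have hupC : u ∉ pC.support := fun h => by
    obtain ⟨z, -, hz⟩ := hpCsupp u h; exact huX (hz ▸ z.2)
  have hvpC : v ∉ pC.support := fun h => by
    obtain ⟨z, -, hz⟩ := hpCsupp v h; exact hvX (hz ▸ z.2)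
  have hupD : u ∉ pD.support := fun h => by
    obtain ⟨z, -, hz⟩ := hpDsupp u h; exact huX (hz ▸ z.2)
  have hvpD : v ∉ pD.support := fun h => by
    obtain ⟨z, -, hz⟩ := hpDsupp v h; exact hvX (hz ▸ z.2)
  have hdisjCD : ∀ a ∈ pC.support, a ∉ pD.support := by
    intro a haC haD
    obtain ⟨z1, hz1, hz1e⟩ := hpCsupp a haC
    obtain ⟨z2, hz2, hz2e⟩ := hpDsupp a haD
    have : z1 = z2 := Subtype.val_injective (hz1e.trans hz2e.symm)
    exact hCD (hz1 ▸ this ▸ hz2)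
  -- the closed walk
  have h_u_xc : G.Adj u (xc : V) := haxc
  have h_yc_v : G.Adj (yc : V) v := hayc.symm
  have h_v_yd : G.Adj v (yd : V) := hayd
  have h_xd_u : G.Adj (xd : V) u := haxd.symm
  set R : G.Walk (yc : V) u :=
    SimpleGraph.Walk.cons h_yc_v (SimpleGraph.Walk.cons h_v_yd (pD.concat h_xd_u)) with hR
  set Q : G.Walk (xc : V) u := pC.append R with hQ
  set W : G.Walk u u := SimpleGraph.Walk.cons h_u_xc Q with hW
  have hQsupp : Q.support = pC.support ++ (v :: (pD.support ++ [u])) := by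
    rw [hQ, SimpleGraph.Walk.support_append, hR]
    simp [SimpleGraph.Walk.support_concat, List.concat_eq_append]
  have hQpath : Q.IsPath := by
    rw [SimpleGraph.Walk.isPath_def, hQsupp]
    rw [List.nodup_append]
    refine ⟨hpCpath.support_nodup, ?_, ?_⟩
    · rw [List.nodup_cons, List.nodup_append]
      refine ⟨?_, hpDpath.support_nodup, by simp, ?_⟩
      · simp only [List.mem_append, List.mem_singleton]
        rintro (h | h)
        · exact hvpD h
        · exact huv h.symm
      · intro a ha
        simp only [List.mem_singleton]
        rintro _ rfl rfl
        exact hupD ha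
    · intro a ha
      simp only [List.mem_cons, List.mem_append, List.mem_singleton]
      intro b hb hab
      rw [← hab] at hb
      revert hb
      rintro (rfl | h | rfl | hnil)
      · exact hvpC ha
      · exact hdisjCD a ha h
      · exact hupC ha
      · exact List.not_mem_nil hnil
  have hxcxd : (xc : V) ≠ (xd : V) := by
    intro h
    have : xc = xd := Subtype.val_injective h
    exact hCD (hxc ▸ this ▸ hxd)
  have hedge : s(u, (xc : V)) ∉ Q.edges := by
    rw [hQ, SimpleGraph.Walk.edges_append, hR]
    simp only [SimpleGraph.Walk.edges_cons, SimpleGraph.Walk.edges_concat,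
      List.mem_append, List.mem_cons, List.concat_eq_append, List.mem_singleton]
    rintro (h | h | h | h | h | h)
    · exact hupC (pC.fst_mem_support_of_mem_edges h)
    · rw [Sym2.eq_iff] at h
      rcases h with ⟨rfl, -⟩ | ⟨rfl, -⟩
      · exact huX yc.2
      · exact huv rfl
    · rw [Sym2.eq_iff] at h
      rcases h with ⟨rfl, -⟩ | ⟨rfl, -⟩
      · exact huv rfl
      · exact huX yd.2
    · exact hupD (pD.fst_mem_support_of_mem_edges h)
    · rw [Sym2.eq_iff] at h
      rcases h with ⟨rfl, h'⟩ | ⟨-, h'⟩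
      · exact huX xd.2
      · exact hxcxd h'
    · exact (List.not_mem_nil h).elim
  have hWcycle : W.IsCycle := (SimpleGraph.Walk.cons_isCycle_iff Q h_u_xc).mpr ⟨hQpath, hedge⟩
  -- length computation
  have hWlen : W.length = pC.length + pD.length + 4 := by
    rw [hW, hQ, hR]
    simp [SimpleGraph.Walk.length_append, SimpleGraph.Walk.length_concat]
    omega
  -- girth contradiction
  have hgirth : G.girth = g := by exact_mod_cast hg
  have hle : (G.egirth : ℕ∞) ≤ (W.length : ℕ∞) :=
    SimpleGraph.le_egirth.mp le_rfl u W hWcycle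
  have hgle : G.girth ≤ W.length := by
    have := ENat.toNat_le_toNat hle (by simp)
    simpa [SimpleGraph.girth] using this
  omega
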